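/- Let (X,d,μ) be a space of homogeneous type, let p(·), q(·) ∈ 𝒫(X) ∩ LH satisfy 1/p(x) − 1/q(x) ≡ η for a constant η ∈ [0,1), and let ω be a weight on X. If there is a constant C such that sup_{t>0} t ‖ω χ_{{x∈X : M_η f(x) > t}}‖_{q(·)} ≤ C‖ω f‖_{p(·)} for every measurable function f, then ω ∈ A_{p(·),q(·)}(X). -/

import Mathlib

open MeasureTheory ENNReal Set Filter Topology

noncomputable section

variable {X : Type*}

/-- `d` is a quasi-metric on `X` with quasi-triangle constant `A0`. -/
def IsQuasiMetric (d : X → X → ℝ) (A0 : ℝ) : Prop :=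
  1 ≤ A0 ∧ (∀ x y, 0 ≤ d x y) ∧ (∀ x y, d x y = 0 ↔ x = y) ∧
    (∀ x y, d x y = d y x) ∧ ∀ x y z, d x y ≤ A0 * (d x z + d z y)

/-- The quasi-metric ball `B(c,r)`. -/
def qball (d : X → X → ℝ) (c : X) (r : ℝ) : Set X := {y | d c y < r}

/-- The measure `μ` is doubling (with constant `Cμ`) on quasi-metric balls:
`0 < μ(B(x,2r)) ≤ Cμ·μ(B(x,r)) < ∞`. -/
def IsDoubling [MeasurableSpace X] (d : X → X → ℝ) (μ : Measure X) (Cμ : ℝ≥0∞) : Prop :=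
  1 ≤ Cμ ∧ ∀ (x : X) (r : ℝ), 0 < r →
    0 < μ (qball d x (2 * r)) ∧ μ (qball d x (2 * r)) ≤ Cμ * μ (qball d x r) ∧
      Cμ * μ (qball d x r) < ∞

/-- The Luxemburg norm `‖f‖_{p(·)}` for a variable (possibly infinite) exponent `p`. -/
def luxNorm [MeasurableSpace X] (μ : Measure X) (p : X → ℝ≥0∞) (f : X → ℝ≥0∞) : ℝ≥0∞ :=
  sInf {lam : ℝ≥0∞ | 0 < lam ∧
    (∫⁻ x in {x | p x ≠ ∞}, (f x / lam) ^ (p x).toReal ∂μ) +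
      essSup (fun x => f x / lam) (μ.restrict {x | p x = ∞}) ≤ 1}

/-- The class `𝒫₁(X)`: exponents with values in `[1,∞)` and `p₊ < ∞`. -/
def MemP1 [MeasurableSpace X] (μ : Measure X) (p : X → ℝ≥0∞) : Prop :=
  Measurable p ∧ (∀ x, 1 ≤ p x) ∧ (∀ x, p x ≠ ∞) ∧ essSup p μ < ∞

/-- The class `𝒫(X)`: additionally `1 < p₋`. -/
def MemP [MeasurableSpace X] (μ : Measure X) (p : X → ℝ≥0∞) : Prop :=
  MemP1 μ p ∧ 1 < essInf p μ

/-- Local log-Hölder continuity `LH₀`. -/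
def MemLH0 (d : X → X → ℝ) (p : X → ℝ≥0∞) : Prop :=
  ∃ C0 : ℝ, 0 ≤ C0 ∧ ∀ x y, d x y < 1 / 2 →
    |(p x).toReal - (p y).toReal| ≤ C0 / Real.log (Real.exp 1 + 1 / d x y)

/-- Log-Hölder decay at infinity `LH_∞` with base point `x0` and limit value `pinf`. -/
def MemLHinf (d : X → X → ℝ) (x0 : X) (pinf : ℝ) (p : X → ℝ≥0∞) : Prop :=
  ∃ Cinf : ℝ, 0 ≤ Cinf ∧ ∀ x, |(p x).toReal - pinf| ≤ Cinf / Real.log (Real.exp 1 + d x x0)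

/-- Global log-Hölder continuity `LH = LH₀ ∩ LH_∞`. -/
def MemLH (d : X → X → ℝ) (p : X → ℝ≥0∞) : Prop :=
  MemLH0 d p ∧ ∃ x0 pinf, MemLHinf d x0 pinf p

/-- `w` is a weight: measurable, positive and finite a.e., and locally integrable. -/
def IsWeight [MeasurableSpace X] (d : X → X → ℝ) (μ : Measure X) (w : X → ℝ≥0∞) : Prop :=
  Measurable w ∧ (∀ᵐ x ∂μ, 0 < w x ∧ w x < ∞) ∧
    ∀ (c : X) (r : ℝ), 0 < r → ∫⁻ x in qball d c r, w x ∂μ < ∞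

/-- The pointwise conjugate exponent `p′(·)`, `1/p(x) + 1/p′(x) = 1`. -/
def conjExp (p : X → ℝ≥0∞) : X → ℝ≥0∞ := fun x => if p x = ∞ then 1 else p x / (p x - 1)

/-- The `A_{p(·),q(·)}` characteristic constant
`sup_B μ(B)^{η−1} ‖w χ_B‖_{q(·)} ‖w⁻¹ χ_B‖_{p′(·)}`. -/
def ApqConst [MeasurableSpace X] (d : X → X → ℝ) (μ : Measure X) (η : ℝ)
    (p q : X → ℝ≥0∞) (w : X → ℝ≥0∞) : ℝ≥0∞ :=
  ⨆ (c : X) (r : ℝ) (_ : 0 < r),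
    μ (qball d c r) ^ (η - 1) * luxNorm μ q ((qball d c r).indicator w) *
      luxNorm μ (conjExp p) ((qball d c r).indicator fun x => (w x)⁻¹)

/-- The fractional maximal operator `M_η`. -/
def fracMax [MeasurableSpace X] (d : X → X → ℝ) (μ : Measure X) (η : ℝ)
    (f : X → ℝ≥0∞) (x : X) : ℝ≥0∞ :=
  ⨆ (c : X) (r : ℝ) (_ : 0 < r) (_ : x ∈ qball d c r),
    μ (qball d c r) ^ (η - 1) * ∫⁻ y in qball d c r, f y ∂μ

/-- The Muckenhoupt `A₁` condition: `Mw ≤ C w` a.e. -/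
def MemA1 [MeasurableSpace X] (d : X → X → ℝ) (μ : Measure X) (w : X → ℝ≥0∞) : Prop :=
  ∃ C : ℝ≥0∞, C ≠ ∞ ∧ ∀ᵐ x ∂μ, fracMax d μ 0 w x ≤ C * w x

/-- The Muckenhoupt `A_p` condition for `1 < p < ∞`. -/
def MemAp [MeasurableSpace X] (d : X → X → ℝ) (μ : Measure X) (p : ℝ)
    (w : X → ℝ≥0∞) : Prop :=
  (⨆ (c : X) (r : ℝ) (_ : 0 < r),
    ((μ (qball d c r))⁻¹ * ∫⁻ x in qball d c r, w x ∂μ) *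
      ((μ (qball d c r))⁻¹ * ∫⁻ x in qball d c r, w x ^ (-(1 / (p - 1))) ∂μ) ^ (p - 1)) ≠ ∞

/-- The class `A_∞ = ⋃_{p ≥ 1} A_p`. -/
def MemAinfty [MeasurableSpace X] (d : X → X → ℝ) (μ : Measure X) (w : X → ℝ≥0∞) : Prop :=
  MemA1 d μ w ∨ ∃ p : ℝ, 1 < p ∧ MemAp d μ p w


/-! ### Auxiliary lemmas for the proof of Statement 2 -/

/-- The modular associated to a variable exponent. -/
def st2Modular [MeasurableSpace X] (μ : Measure X) (e : X → ℝ≥0∞) (f : X → ℝ≥0∞)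
    (lam : ℝ≥0∞) : ℝ≥0∞ :=
  (∫⁻ x in {x | e x ≠ ∞}, (f x / lam) ^ (e x).toReal ∂μ) +
    essSup (fun x => f x / lam) (μ.restrict {x | e x = ∞})

lemma st2_luxNorm_eq [MeasurableSpace X] (μ : Measure X) (e f : X → ℝ≥0∞) :
    luxNorm μ e f = sInf {lam : ℝ≥0∞ | 0 < lam ∧ st2Modular μ e f lam ≤ 1} := rfl

lemma st2_modular_mono [MeasurableSpace X] (μ : Measure X) (e : X → ℝ≥0∞)
    {f g : X → ℝ≥0∞} (h : f ≤ g) (lam : ℝ≥0∞) :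
    st2Modular μ e f lam ≤ st2Modular μ e g lam := by
  refine add_le_add (lintegral_mono fun x => ?_)
    (essSup_mono_ae (Filter.Eventually.of_forall fun x => ?_))
  · exact ENNReal.rpow_le_rpow (ENNReal.div_le_div_right (h x) lam) ENNReal.toReal_nonneg
  · exact ENNReal.div_le_div_right (h x) lam

lemma st2_luxNorm_mono [MeasurableSpace X] (μ : Measure X) (e : X → ℝ≥0∞)
    {f g : X → ℝ≥0∞} (h : f ≤ g) : luxNorm μ e f ≤ luxNorm μ e g := by
  rw [st2_luxNorm_eq, st2_luxNorm_eq]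
  exact sInf_le_sInf fun lam hl => ⟨hl.1, (st2_modular_mono μ e h lam).trans hl.2⟩

lemma st2_modular_congr [MeasurableSpace X] (μ : Measure X) (e : X → ℝ≥0∞)
    {f g : X → ℝ≥0∞} (h : f =ᵐ[μ] g) :
    st2Modular μ e f = st2Modular μ e g := by
  funext lam
  unfold st2Modular
  congr 1
  · exact lintegral_congr_ae (ae_restrict_of_ae (h.mono fun x hx => by simp only [hx]))
  · exact essSup_congr_ae (ae_restrict_of_ae (h.mono fun x hx => by simp only [hx]))

lemma st2_luxNorm_congr [MeasurableSpace X] (μ : Measure X) (e : X → ℝ≥0∞)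
    {f g : X → ℝ≥0∞} (h : f =ᵐ[μ] g) : luxNorm μ e f = luxNorm μ e g := by
  rw [st2_luxNorm_eq, st2_luxNorm_eq, st2_modular_congr μ e h]

lemma st2_luxNorm_le [MeasurableSpace X] (μ : Measure X) (e f : X → ℝ≥0∞) {lam : ℝ≥0∞}
    (h0 : 0 < lam) (h1 : st2Modular μ e f lam ≤ 1) : luxNorm μ e f ≤ lam := by
  rw [st2_luxNorm_eq]
  exact sInf_le ⟨h0, h1⟩

/-- If `M_η : L^{p(·)}(X,ω) → WL^{q(·)}(X,ω)` is bounded, then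
`ω ∈ A_{p(·),q(·)}(X)`. -/
theorem statement2 {X : Type*} [MeasurableSpace X]
    (d : X → X → ℝ) (A0 : ℝ) (μ : Measure X) (Cμ : ℝ≥0∞)
    (hd : IsQuasiMetric d A0)
    (hball : ∀ (c : X) (r : ℝ), MeasurableSet (qball d c r))
    (hdbl : IsDoubling d μ Cμ)
    (η : ℝ) (hη0 : 0 ≤ η) (hη1 : η < 1)
    (p q : X → ℝ≥0∞) (hp : MemP μ p) (hq : MemP μ q)
    (hpLH : MemLH d p) (hqLH : MemLH d q)
    (hpq : ∀ x, (p x)⁻¹ = (q x)⁻¹ + ENNReal.ofReal η)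
    (ω : X → ℝ≥0∞) (hω : IsWeight d μ ω)
    (C : ℝ≥0∞) (hC : C ≠ ∞)
    (hbound : ∀ f : X → ℝ≥0∞, Measurable f → ∀ t : ℝ≥0∞, 0 < t →
      t * luxNorm μ q ({x | t < fracMax d μ η f x}.indicator ω) ≤
        C * luxNorm μ p (fun x => ω x * f x)) :
    ApqConst d μ η p q ω ≠ ∞ := by
  classical
  obtain ⟨⟨hpm, hp1, hpt, _⟩, hpinf⟩ := hp
  obtain ⟨⟨hqm, hq1, hqt, _⟩, _⟩ := hq
  obtain ⟨hωm, hωae, _⟩ := hω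
  have hq1r : ∀ x, 1 ≤ (q x).toReal := fun x => by
    simpa using ENNReal.toReal_mono (hqt x) (hq1 x)
  have hp1r : ∀ x, 1 ≤ (p x).toReal := fun x => by
    simpa using ENNReal.toReal_mono (hpt x) (hp1 x)
  -- choose a finite lower exponent bound r₀ with 1 < r₀ < essInf p
  obtain ⟨r₀, hr₀1, hr₀m⟩ := exists_between (lt_min hpinf (one_lt_two : (1:ℝ≥0∞) < 2))
  have hr₀e : r₀ < essInf p μ := hr₀m.trans_le (min_le_left _ _)
  have hr₀t : r₀ ≠ ∞ := ((hr₀m.trans_le (min_le_right _ _)).trans_le le_top).ne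
  set rr := r₀.toReal with hrrdef
  have hrr1 : 1 < rr := by
    have h2 : r₀ < (2 : ℝ≥0∞) := hr₀m.trans_le (min_le_right _ _)
    have := ENNReal.toReal_strict_mono hr₀t hr₀1
    simpa using this
  set s := rr / (rr - 1) with hsdef
  have hs0 : 0 < s := div_pos (by linarith) (by linarith)
  have haep : ∀ᵐ x ∂μ, r₀ < p x := eventually_lt_of_lt_liminf hr₀e
  have hae : ∀ᵐ x ∂μ, (0 < ω x ∧ ω x < ∞) ∧ r₀ < p x := hωae.and haep
  -- conjugate exponent facts
  have hconj : ∀ x, conjExp p x = p x / (p x - 1) := fun x => if_neg (hpt x)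
  have hp'm : Measurable (conjExp p) := by
    have h : conjExp p = fun x => p x / (p x - 1) := funext hconj
    rw [h]
    exact hpm.div (hpm.sub measurable_const)
  set G := {x | conjExp p x ≠ ∞} with hGdef
  have hGmeas : MeasurableSet G := by
    have h : G = (conjExp p ⁻¹' {∞})ᶜ := by
      ext x; simp [hGdef]
    rw [h]
    exact (hp'm (measurableSet_singleton ∞)).compl
  have hmemG : ∀ x, 1 < p x → conjExp p x ≠ ∞ := by
    intro x hx hcon
    rw [hconj x] at hcon
    rcases ENNReal.div_eq_top.mp hcon with ⟨_, h2⟩ | ⟨h1, _⟩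
    · exact absurd (tsub_eq_zero_iff_le.mp h2) (not_le.mpr hx)
    · exact hpt x h1
  have hGnull : μ Gᶜ = 0 := by
    have h : ∀ᵐ x ∂μ, x ∈ G := haep.mono fun x hx => hmemG x (lt_trans hr₀1 hx)
    exact ae_iff.mp h
  -- simplified modulars
  have modq : ∀ (f : X → ℝ≥0∞) (lam : ℝ≥0∞),
      st2Modular μ q f lam = ∫⁻ x, (f x / lam) ^ (q x).toReal ∂μ := by
    intro f lam
    unfold st2Modular
    have h1 : {x | q x ≠ ∞} = Set.univ := eq_univ_of_forall hqt
    have h2 : {x | q x = ∞} = (∅ : Set X) := eq_empty_iff_forall_notMem.mpr fun x => hqt x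
    rw [h1, h2, Measure.restrict_univ, Measure.restrict_empty, essSup_measure_zero]
    simp
  have modp : ∀ (f : X → ℝ≥0∞) (lam : ℝ≥0∞),
      st2Modular μ p f lam = ∫⁻ x, (f x / lam) ^ (p x).toReal ∂μ := by
    intro f lam
    unfold st2Modular
    have h1 : {x | p x ≠ ∞} = Set.univ := eq_univ_of_forall hpt
    have h2 : {x | p x = ∞} = (∅ : Set X) := eq_empty_iff_forall_notMem.mpr fun x => hpt x
    rw [h1, h2, Measure.restrict_univ, Measure.restrict_empty, essSup_measure_zero]
    simp
  have modp' : ∀ (f : X → ℝ≥0∞) (lam : ℝ≥0∞),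
      st2Modular μ (conjExp p) f lam
        = ∫⁻ x in G, (f x / lam) ^ (conjExp p x).toReal ∂μ := by
    intro f lam
    unfold st2Modular
    have h2 : μ.restrict {x | conjExp p x = ∞} = 0 := by
      rw [Measure.restrict_eq_zero]
      have h : {x | conjExp p x = ∞} = Gᶜ := by
        ext x; simp [hGdef]
      rw [h]; exact hGnull
    rw [h2, essSup_measure_zero, ← hGdef]
    simp
  -- pointwise real-exponent facts
  have hfacts : ∀ x, r₀ < p x →
      1 ≤ (p x).toReal ∧ 0 < (conjExp p x).toReal ∧ (conjExp p x).toReal ≤ s ∧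
      ((conjExp p x).toReal - 1) * (p x).toReal = (conjExp p x).toReal ∧
      (-(1 / (p x).toReal)) * (p x).toReal = -1 ∧ 1 / (p x).toReal ≤ 1 := by
    intro x hx
    have hpr : rr ≤ (p x).toReal := ENNReal.toReal_mono (hpt x) hx.le
    have h1pr : 1 < (p x).toReal := lt_of_lt_of_le hrr1 hpr
    have hne : (p x).toReal - 1 ≠ 0 := by linarith
    have hne0 : (p x).toReal ≠ 0 := by linarith
    have hcr : (conjExp p x).toReal = (p x).toReal / ((p x).toReal - 1) := by
      rw [hconj x, ENNReal.toReal_div, ENNReal.toReal_sub_of_le (hp1 x) (hpt x),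
        ENNReal.toReal_one]
    refine ⟨h1pr.le, ?_, ?_, ?_, ?_, ?_⟩
    · rw [hcr]; exact div_pos (by linarith) (by linarith)
    · rw [hcr, hsdef, div_le_div_iff₀ (by linarith) (by linarith)]
      nlinarith
    · rw [hcr]; field_simp; try ring
    · field_simp
    · rw [div_le_one (by linarith)]; linarith
  -- reduce to a uniform bound over balls
  have main : ApqConst d μ η p q ω ≤ C := by
    rw [ApqConst]
    refine iSup_le fun c => iSup_le fun r => iSup_le fun hr => ?_
    set B := qball d c r with hBdef
    have hBm : MeasurableSet B := hball c r
    -- measure of the ball is positive and finite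
    obtain ⟨hCμ1, hdb⟩ := hdbl
    obtain ⟨hpos2, hle2, hlt2⟩ := hdb c r hr
    have hm0 : μ B ≠ 0 := by
      intro h
      rw [← hBdef] at hle2
      rw [h, mul_zero] at hle2
      exact absurd (le_antisymm hle2 (zero_le)) hpos2.ne'
    have hmt : μ B ≠ ∞ := by
      have h1 : μ B ≤ Cμ * μ B := le_mul_of_one_le_left (zero_le) hCμ1
      rw [← hBdef] at hlt2
      exact ne_top_of_le_ne_top hlt2.ne h1
    have hmp0 : μ B ^ (η - 1) ≠ 0 := by
      simp [ENNReal.rpow_eq_zero_iff, hm0, hmt]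
    have hmpt : μ B ^ (η - 1) ≠ ∞ := by
      simp [ENNReal.rpow_eq_top_iff, hm0, hmt]
    -- lower bound for the fractional maximal function on B
    have hfrac : ∀ (f : X → ℝ≥0∞) (x : X), x ∈ B →
        μ B ^ (η - 1) * ∫⁻ y in B, f y ∂μ ≤ fracMax d μ η f x := by
      intro f x hx
      rw [fracMax]
      exact le_iSup_of_le c (le_iSup_of_le r (le_iSup_of_le hr (le_iSup_of_le hx le_rfl)))
    -- a piece of B where ω is bounded away from 0 and ∞
    set T : ℕ → Set X := fun n => {x | ((n : ℝ≥0∞) + 1)⁻¹ ≤ ω x ∧ ω x ≤ (n : ℝ≥0∞) + 1}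
      with hTdef
    have hTmeas : ∀ n, MeasurableSet (T n) := by
      intro n
      have h : T n = {x | ((n : ℝ≥0∞) + 1)⁻¹ ≤ ω x} ∩ {x | ω x ≤ (n : ℝ≥0∞) + 1} := by
        ext x; simp [hTdef, Set.mem_setOf_eq]
      rw [h]
      exact (measurableSet_le measurable_const hωm).inter (measurableSet_le hωm measurable_const)
    have hexn : ∃ n, μ (B ∩ T n) ≠ 0 := by
      by_contra hcon
      push_neg at hcon
      have hU : μ (⋃ n, B ∩ T n) = 0 := measure_iUnion_null hcon
      have hsub : ∀ᵐ x ∂μ, x ∈ B → x ∈ ⋃ n, B ∩ T n := by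
        refine hωae.mono fun x hx hxB => ?_
        obtain ⟨n1, hn1⟩ := ENNReal.exists_nat_gt hx.2.ne
        obtain ⟨n2, hn2⟩ := ENNReal.exists_nat_gt
          (show (ω x)⁻¹ ≠ ∞ from ENNReal.inv_ne_top.mpr hx.1.ne')
        refine Set.mem_iUnion.mpr ⟨max n1 n2, hxB, ?_, ?_⟩
        · have h1 : (ω x)⁻¹ ≤ ((max n1 n2 : ℕ) : ℝ≥0∞) + 1 := by
            refine hn2.le.trans ?_
            have hcast : ((n2 : ℕ) : ℝ≥0∞) ≤ ((max n1 n2 : ℕ) : ℝ≥0∞) := by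
              exact_mod_cast le_max_right n1 n2
            exact hcast.trans (le_add_of_nonneg_right (zero_le))
          exact le_of_le_of_eq (ENNReal.inv_le_inv.mpr h1) (inv_inv _)
        · refine hn1.le.trans ?_
          have hcast : ((n1 : ℕ) : ℝ≥0∞) ≤ ((max n1 n2 : ℕ) : ℝ≥0∞) := by
            exact_mod_cast le_max_left n1 n2
          exact hcast.trans (le_add_of_nonneg_right (zero_le))
      have hBle : μ B ≤ μ (⋃ n, B ∩ T n) := measure_mono_ae hsub
      rw [hU] at hBle
      exact hm0 (le_antisymm hBle (zero_le))
    obtain ⟨n₀, hn₀⟩ := hexn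
    set K : ℝ≥0∞ := (n₀ : ℝ≥0∞) + 1 with hKdef
    have hK0 : K ≠ 0 := by simp [hKdef]
    have hKt : K ≠ ∞ := by simp [hKdef]
    set S := B ∩ T n₀ with hSdef
    have hSmeas : MeasurableSet S := hBm.inter (hTmeas n₀)
    have hSsub : S ⊆ B := Set.inter_subset_left
    have hμS0 : μ S ≠ 0 := hn₀
    have hμSt : μ S ≠ ∞ := ne_top_of_le_ne_top hmt (measure_mono hSsub)
    have hSω : ∀ x ∈ S, K⁻¹ ≤ ω x ∧ ω x ≤ K := fun x hx => hx.2
    -- abbreviations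
    set N := luxNorm μ q (B.indicator ω) with hNdef
    set P := luxNorm μ (conjExp p) (B.indicator fun x => (ω x)⁻¹) with hPdef
    -- monotonicity of the norm in the superlevel set
    have hNlow : ∀ (t : ℝ≥0∞) (f : X → ℝ≥0∞), B ⊆ {x | t < fracMax d μ η f x} →
        N ≤ luxNorm μ q ({x | t < fracMax d μ η f x}.indicator ω) := by
      intro t f hsub
      rw [hNdef]
      exact st2_luxNorm_mono μ q (Set.indicator_le_indicator_of_subset hsub fun x => zero_le)
    -- Step 0 : N is finite
    set f₀ : X → ℝ≥0∞ := S.indicator fun x => (ω x)⁻¹ with hf₀def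
    have hf₀m : Measurable f₀ := hωm.inv.indicator hSmeas
    have hωf₀ : ∀ x, ω x * f₀ x = S.indicator (fun _ => 1) x := by
      intro x
      by_cases hx : x ∈ S
      · rw [hf₀def, Set.indicator_of_mem hx, Set.indicator_of_mem hx]
        have h0 : ω x ≠ 0 :=
          (lt_of_lt_of_le (ENNReal.inv_pos.mpr hKt) (hSω x hx).1).ne'
        have ht : ω x ≠ ∞ := ne_top_of_le_ne_top hKt (hSω x hx).2
        exact ENNReal.mul_inv_cancel h0 ht
      · simp [hf₀def, Set.indicator_of_notMem hx]
    set lam₁ := max 1 (μ B) with hlam₁def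
    have hlam₁0 : (0 : ℝ≥0∞) < lam₁ := lt_of_lt_of_le zero_lt_one (le_max_left _ _)
    have hlam₁t : lam₁ ≠ ∞ := by
      have h : lam₁ < ∞ := max_lt ENNReal.one_lt_top (lt_top_iff_ne_top.mpr hmt)
      exact h.ne
    have hlux₀ : luxNorm μ p (fun x => ω x * f₀ x) ≤ lam₁ := by
      refine st2_luxNorm_le μ p _ hlam₁0 ?_
      rw [modp]
      have hmono : ∀ x, ((ω x * f₀ x) / lam₁) ^ (p x).toReal
          ≤ S.indicator (fun _ => lam₁⁻¹) x := by
        intro x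
        rw [hωf₀ x]
        by_cases hx : x ∈ S
        · rw [Set.indicator_of_mem hx, Set.indicator_of_mem hx, one_div]
          calc (lam₁⁻¹) ^ (p x).toReal ≤ lam₁⁻¹ ^ (1 : ℝ) :=
                ENNReal.rpow_le_rpow_of_exponent_ge
                  (ENNReal.inv_le_one.mpr (le_max_left _ _)) (hp1r x)
            _ = lam₁⁻¹ := ENNReal.rpow_one _
        · rw [Set.indicator_of_notMem hx, Set.indicator_of_notMem hx]
          simp [ENNReal.zero_rpow_of_pos (lt_of_lt_of_le zero_lt_one (hp1r x))]
      calc ∫⁻ x, ((ω x * f₀ x) / lam₁) ^ (p x).toReal ∂μ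
          ≤ ∫⁻ x, S.indicator (fun _ => lam₁⁻¹) x ∂μ := lintegral_mono hmono
        _ = lam₁⁻¹ * μ S := by rw [lintegral_indicator hSmeas, setLIntegral_const]
        _ ≤ lam₁⁻¹ * lam₁ := mul_le_mul_right
            ((measure_mono hSsub).trans (le_max_right _ _)) _
        _ = 1 := ENNReal.inv_mul_cancel hlam₁0.ne' hlam₁t
    have hI₀ : K⁻¹ * μ S ≤ ∫⁻ x in B, f₀ x ∂μ := by
      have h1 : ∫⁻ x in B, S.indicator (fun _ => K⁻¹) x ∂μ ≤ ∫⁻ x in B, f₀ x ∂μ := by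
        refine lintegral_mono fun x => ?_
        by_cases hx : x ∈ S
        · rw [Set.indicator_of_mem hx, hf₀def, Set.indicator_of_mem hx]
          exact ENNReal.inv_le_inv.mpr (hSω x hx).2
        · simp [Set.indicator_of_notMem hx]
      refine le_trans (le_of_eq ?_) h1
      rw [lintegral_indicator hSmeas, Measure.restrict_restrict hSmeas,
        Set.inter_eq_self_of_subset_left hSsub, setLIntegral_const]
    set b' := μ B ^ (η - 1) * (K⁻¹ * μ S) with hb'def
    have hb'0 : b' ≠ 0 :=
      mul_ne_zero hmp0 (mul_ne_zero (ENNReal.inv_ne_zero.mpr hKt) hμS0)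
    have hb't : b' ≠ ∞ :=
      ENNReal.mul_ne_top hmpt (ENNReal.mul_ne_top (ENNReal.inv_ne_top.mpr hK0) hμSt)
    set t₀ := b' / 2 with ht₀def
    have ht₀0 : 0 < t₀ := ENNReal.div_pos hb'0 (by norm_num)
    have ht₀b : t₀ < b' := ENNReal.half_lt_self hb'0 hb't
    have ht₀t : t₀ ≠ ∞ := (ENNReal.div_lt_top hb't (by norm_num)).ne
    have hBsub₀ : B ⊆ {x | t₀ < fracMax d μ η f₀ x} := by
      intro x hx
      have h1 : b' ≤ μ B ^ (η - 1) * ∫⁻ y in B, f₀ y ∂μ := by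
        rw [hb'def]; exact mul_le_mul_right hI₀ _
      exact lt_of_lt_of_le (lt_of_lt_of_le ht₀b h1) (hfrac f₀ x hx)
    have hNt : N ≠ ∞ := by
      have h1 := hbound f₀ hf₀m t₀ ht₀0
      have h2 : t₀ * N ≤ C * lam₁ :=
        le_trans (mul_le_mul_right (hNlow t₀ f₀ hBsub₀) t₀)
          (h1.trans (mul_le_mul_right hlux₀ C))
      have h3 : N ≤ C * lam₁ / t₀ :=
        (ENNReal.le_div_iff_mul_le (Or.inl ht₀0.ne') (Or.inl ht₀t)).mpr (by rwa [mul_comm] at h2)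
      exact ne_top_of_le_ne_top (ENNReal.div_lt_top (ENNReal.mul_ne_top hC hlam₁t) ht₀0.ne').ne h3
    -- if N = 0 the bound is trivial
    rcases eq_or_ne N 0 with hN0 | hN0
    · simp [hN0]
    set a := μ B ^ (η - 1) * N with hadef
    have ha0 : a ≠ 0 := mul_ne_zero hmp0 hN0
    have hat : a ≠ ∞ := ENNReal.mul_ne_top hmpt hNt
    -- Step B : testing the weak-type bound against normalized functions
    have stepB : ∀ g : X → ℝ≥0∞, Measurable g → luxNorm μ p g ≤ 1 →
        μ B ^ (η - 1) * (∫⁻ x in B, (ω x)⁻¹ * g x ∂μ) * N ≤ C := by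
      intro g hgm hg1
      set f := B.indicator (fun x => (ω x)⁻¹ * g x) with hfdef
      have hfm : Measurable f := (hωm.inv.mul hgm).indicator hBm
      have hωf : luxNorm μ p (fun x => ω x * f x) ≤ 1 := by
        have hee : (fun x => ω x * f x) =ᵐ[μ] B.indicator g := by
          filter_upwards [hωae] with x hx
          by_cases hxB : x ∈ B
          · simp only [hfdef, Set.indicator_of_mem hxB, ← mul_assoc,
              ENNReal.mul_inv_cancel hx.1.ne' hx.2.ne, one_mul]
          · simp [hfdef, Set.indicator_of_notMem hxB]
        rw [st2_luxNorm_congr μ p hee]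
        exact le_trans (st2_luxNorm_mono μ p (Set.indicator_le_self B g)) hg1
      have hIeq : ∫⁻ x in B, f x ∂μ = ∫⁻ x in B, (ω x)⁻¹ * g x ∂μ := by
        rw [hfdef, lintegral_indicator hBm, Measure.restrict_restrict hBm, Set.inter_self]
      set A := μ B ^ (η - 1) * ∫⁻ x in B, (ω x)⁻¹ * g x ∂μ with hAdef
      have hclaim : ∀ t : ℝ≥0∞, 0 < t → t < A → t * N ≤ C := by
        intro t ht0 htA
        have hsub : B ⊆ {x | t < fracMax d μ η f x} := by
          intro x hx
          show t < fracMax d μ η f x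
          refine lt_of_lt_of_le htA ?_
          rw [hAdef, ← hIeq]
          exact hfrac f x hx
        calc t * N ≤ t * luxNorm μ q ({x | t < fracMax d μ η f x}.indicator ω) :=
              mul_le_mul_right (hNlow t f hsub) t
          _ ≤ C * luxNorm μ p (fun x => ω x * f x) := hbound f hfm t ht0
          _ ≤ C * 1 := mul_le_mul_right hωf C
          _ = C := mul_one C
      have hAN : A * N ≤ C := by
        rcases eq_or_ne A 0 with h | h
        · simp [h]
        have hAle : A ≤ C / N := by
          by_contra hcon
          push_neg at hcon
          obtain ⟨t, ht1, ht2⟩ := exists_between hcon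
          have ht0 : 0 < t := lt_of_le_of_lt (zero_le) ht1
          exact absurd ((ENNReal.le_div_iff_mul_le (Or.inl hN0) (Or.inl hNt)).mpr
            (hclaim t ht0 ht2)) (not_le.mpr ht1)
        calc A * N ≤ (C / N) * N := mul_le_mul_left hAle N
          _ = C := ENNReal.div_mul_cancel hN0 hNt
      exact hAN
    -- Duality step : bound P
    have hPle : P ≤ C / a := by
      refine le_of_forall_gt_imp_ge_of_dense fun lam hlam => ?_
      rcases eq_or_ne lam ∞ with hlamtop | hlamtop
      · exact hlamtop ▸ le_top
      have hlam0 : (0 : ℝ≥0∞) < lam := lt_of_le_of_lt (zero_le) hlam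
      rw [hPdef]
      refine st2_luxNorm_le μ (conjExp p) _ hlam0 ?_
      rw [modp']
      set hh : ℕ → X → ℝ≥0∞ := fun n => B.indicator (fun x => min (ω x)⁻¹ (n : ℝ≥0∞))
        with hhhdef
      set Fn : ℕ → X → ℝ≥0∞ := fun n x => (hh n x / lam) ^ (conjExp p x).toReal with hFndef
      have hhm : ∀ n, Measurable (hh n) := fun n =>
        (hωm.inv.min measurable_const).indicator hBm
      have hFnm : ∀ n, Measurable (Fn n) := fun n =>
        ((hhm n).div measurable_const).pow hp'm.ennreal_toReal
      have hFnmono : Monotone Fn := by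
        intro n m hnm
        intro x
        refine ENNReal.rpow_le_rpow (ENNReal.div_le_div_right ?_ lam) ENNReal.toReal_nonneg
        by_cases hxB : x ∈ B
        · simp only [hhhdef, Set.indicator_of_mem hxB]
          exact min_le_min le_rfl (by exact_mod_cast hnm)
        · simp [hhhdef, Set.indicator_of_notMem hxB]
      have hhle : ∀ n x, hh n x ≤ (n : ℝ≥0∞) := by
        intro n x
        by_cases hxB : x ∈ B
        · simp only [hhhdef, Set.indicator_of_mem hxB]
          exact min_le_right _ _
        · simp [hhhdef, Set.indicator_of_notMem hxB]
      have key_n : ∀ n, ∫⁻ x in G, Fn n x ∂μ ≤ 1 := by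
        intro n
        by_contra hgt
        push_neg at hgt
        set ρ := ∫⁻ x in G, Fn n x ∂μ with hρdef
        have hρ1 : 1 < ρ := hgt
        have hρ0 : ρ ≠ 0 := (lt_trans zero_lt_one hρ1).ne'
        have hρt : ρ ≠ ∞ := by
          have hbd : ∀ᵐ x ∂(μ.restrict G),
              Fn n x ≤ B.indicator (fun _ => max 1 (((n : ℝ≥0∞) / lam) ^ s)) x := by
            refine ae_restrict_of_ae (hae.mono fun x hx => ?_)
            obtain ⟨hpr1, hcr0, hcrs, hcrm, hnegm, hprinv⟩ := hfacts x hx.2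
            by_cases hxB : x ∈ B
            · rw [Set.indicator_of_mem hxB]
              have hbase : hh n x / lam ≤ (n : ℝ≥0∞) / lam :=
                ENNReal.div_le_div_right (hhle n x) lam
              have h1 : Fn n x ≤ ((n : ℝ≥0∞) / lam) ^ (conjExp p x).toReal :=
                ENNReal.rpow_le_rpow hbase ENNReal.toReal_nonneg
              rcases le_or_gt ((n : ℝ≥0∞) / lam) 1 with hc | hc
              · exact le_trans (h1.trans (ENNReal.rpow_le_one hc ENNReal.toReal_nonneg))
                  (le_max_left _ _)
              · exact le_trans (h1.trans
                  (ENNReal.rpow_le_rpow_of_exponent_le hc.le hcrs)) (le_max_right _ _)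
            · rw [Set.indicator_of_notMem hxB]
              have h0 : hh n x = 0 := by simp [hhhdef, Set.indicator_of_notMem hxB]
              simp [hFndef, h0, ENNReal.zero_rpow_of_pos hcr0]
          have hb2 : ρ ≤ max 1 (((n : ℝ≥0∞) / lam) ^ s) * μ B := by
            calc ρ ≤ ∫⁻ x in G, B.indicator (fun _ => max 1 (((n : ℝ≥0∞) / lam) ^ s)) x ∂μ :=
                  lintegral_mono_ae hbd
              _ ≤ ∫⁻ x, B.indicator (fun _ => max 1 (((n : ℝ≥0∞) / lam) ^ s)) x ∂μ :=
                  setLIntegral_le_lintegral _ _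
              _ = max 1 (((n : ℝ≥0∞) / lam) ^ s) * μ B := by
                  rw [lintegral_indicator hBm, setLIntegral_const]
          have hmaxt : max 1 (((n : ℝ≥0∞) / lam) ^ s) ≠ ∞ := by
            have htop : ((n : ℝ≥0∞) / lam) ^ s ≠ ∞ :=
              ENNReal.rpow_ne_top_of_nonneg hs0.le
                (ENNReal.div_lt_top (ENNReal.natCast_ne_top n) hlam0.ne').ne
            exact (max_lt ENNReal.one_lt_top htop.lt_top).ne
          exact ne_top_of_le_ne_top (ENNReal.mul_ne_top hmaxt hmt) hb2
        -- the normalized test function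
        set g : X → ℝ≥0∞ := fun x => G.indicator
          (fun y => (hh n y / lam) ^ ((conjExp p y).toReal - 1)
            * ρ ^ (-(1 / (p y).toReal))) x with hgdef
        have hgm : Measurable g := by
          refine Measurable.indicator ?_ hGmeas
          exact (((hhm n).div measurable_const).pow
              (hp'm.ennreal_toReal.sub measurable_const)).mul
            (measurable_const.pow (measurable_const.div hpm.ennreal_toReal).neg)
        have hlux_g : luxNorm μ p g ≤ 1 := by
          refine st2_luxNorm_le μ p g one_pos ?_
          rw [modp]
          have heq : ∀ᵐ x ∂μ, (g x / 1) ^ (p x).toReal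
              ≤ G.indicator (fun y => Fn n y * ρ⁻¹) x := by
            refine hae.mono fun x hx => ?_
            obtain ⟨hpr1, hcr0, hcrs, hcrm, hnegm, hprinv⟩ := hfacts x hx.2
            have hxG : x ∈ G := hmemG x (lt_trans hr₀1 hx.2)
            simp only [div_one, hgdef]
            rw [Set.indicator_of_mem hxG, Set.indicator_of_mem hxG,
              ENNReal.mul_rpow_of_nonneg _ _ ENNReal.toReal_nonneg,
              ← ENNReal.rpow_mul, ← ENNReal.rpow_mul, hcrm, hnegm, ENNReal.rpow_neg_one,
              hFndef]
          calc ∫⁻ x, (g x / 1) ^ (p x).toReal ∂μ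
              ≤ ∫⁻ x, G.indicator (fun y => Fn n y * ρ⁻¹) x ∂μ := lintegral_mono_ae heq
            _ = ∫⁻ x in G, Fn n x * ρ⁻¹ ∂μ := lintegral_indicator hGmeas _
            _ = ρ * ρ⁻¹ := by rw [lintegral_mul_const _ (hFnm n), ← hρdef]
            _ ≤ 1 := le_of_eq (ENNReal.mul_inv_cancel hρ0 hρt)
        have hIlow : lam ≤ ∫⁻ x in B, (ω x)⁻¹ * g x ∂μ := by
          have h1 : ∫⁻ x in B, hh n x * g x ∂μ ≤ ∫⁻ x in B, (ω x)⁻¹ * g x ∂μ := by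
            refine lintegral_mono_ae ?_
            filter_upwards [self_mem_ae_restrict hBm] with x hxB
            refine mul_le_mul_left ?_ (g x)
            simp only [hhhdef, Set.indicator_of_mem hxB]
            exact min_le_left _ _
          have h2 : ∫⁻ x, hh n x * g x ∂μ = ∫⁻ x in B, hh n x * g x ∂μ := by
            calc ∫⁻ x, hh n x * g x ∂μ
                = ∫⁻ x, B.indicator (fun y => hh n y * g y) x ∂μ := by
                  refine lintegral_congr fun x => ?_
                  by_cases hxB : x ∈ B
                  · rw [Set.indicator_of_mem hxB]
                  · have h0 : hh n x = 0 := by simp [hhhdef, Set.indicator_of_notMem hxB]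
                    rw [Set.indicator_of_notMem hxB, h0, zero_mul]
              _ = ∫⁻ x in B, hh n x * g x ∂μ := lintegral_indicator hBm _
          have h3 : ∫⁻ x in G, hh n x * g x ∂μ ≤ ∫⁻ x, hh n x * g x ∂μ :=
            setLIntegral_le_lintegral _ _
          have h4 : lam ≤ ∫⁻ x in G, hh n x * g x ∂μ := by
            have hptwise : ∀ᵐ x ∂(μ.restrict G), lam * ρ⁻¹ * Fn n x ≤ hh n x * g x := by
              filter_upwards [self_mem_ae_restrict hGmeas, ae_restrict_of_ae hae]
                with x hxG hx
              obtain ⟨hpr1, hcr0, hcrs, hcrm, hnegm, hprinv⟩ := hfacts x hx.2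
              have hstep1 : hh n x * (hh n x / lam) ^ ((conjExp p x).toReal - 1)
                  = lam * Fn n x := by
                rcases eq_or_ne (hh n x) 0 with h0 | h0
                · simp [hFndef, h0, ENNReal.zero_rpow_of_pos hcr0]
                · have hhnt : hh n x ≠ ∞ :=
                    ne_top_of_le_ne_top (ENNReal.natCast_ne_top n) (hhle n x)
                  have hq0 : hh n x / lam ≠ 0 := by
                    simp [ENNReal.div_eq_zero_iff, h0, hlamtop]
                  have hqt' : hh n x / lam ≠ ∞ :=
                    (ENNReal.div_lt_top hhnt hlam0.ne').ne
                  calc hh n x * (hh n x / lam) ^ ((conjExp p x).toReal - 1)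
                      = (lam * (hh n x / lam)) * (hh n x / lam) ^ ((conjExp p x).toReal - 1) := by
                        rw [ENNReal.mul_div_cancel' (fun h => absurd h hlam0.ne') (fun h => absurd h hlamtop)]
                    _ = lam * ((hh n x / lam) ^ (1 : ℝ)
                          * (hh n x / lam) ^ ((conjExp p x).toReal - 1)) := by
                        rw [ENNReal.rpow_one, mul_assoc]
                    _ = lam * (hh n x / lam) ^ (1 + ((conjExp p x).toReal - 1)) := by
                        rw [← ENNReal.rpow_add _ _ hq0 hqt']
                    _ = lam * Fn n x := by
                        rw [show (1 : ℝ) + ((conjExp p x).toReal - 1)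
                          = (conjExp p x).toReal by ring]
              have hstep2 : (ρ : ℝ≥0∞) ^ (-1 : ℝ) ≤ ρ ^ (-(1 / (p x).toReal)) :=
                ENNReal.rpow_le_rpow_of_exponent_le hρ1.le (by linarith)
              calc lam * ρ⁻¹ * Fn n x = lam * Fn n x * ρ ^ (-1 : ℝ) := by
                    rw [ENNReal.rpow_neg_one]; ring
                _ ≤ lam * Fn n x * ρ ^ (-(1 / (p x).toReal)) := mul_le_mul_right hstep2 _
                _ = hh n x * (hh n x / lam) ^ ((conjExp p x).toReal - 1)
                      * ρ ^ (-(1 / (p x).toReal)) := by rw [hstep1]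
                _ = hh n x * ((hh n x / lam) ^ ((conjExp p x).toReal - 1)
                      * ρ ^ (-(1 / (p x).toReal))) := by rw [mul_assoc]
                _ = hh n x * g x := by
                    simp only [hgdef]
                    rw [Set.indicator_of_mem hxG]
            calc lam = lam * ρ⁻¹ * ρ := by
                  rw [mul_assoc, ENNReal.inv_mul_cancel hρ0 hρt, mul_one]
              _ = ∫⁻ x in G, lam * ρ⁻¹ * Fn n x ∂μ := by
                  rw [lintegral_const_mul _ (hFnm n), ← hρdef]
              _ ≤ ∫⁻ x in G, hh n x * g x ∂μ := lintegral_mono_ae hptwise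
          exact ((h4.trans h3).trans_eq h2).trans h1
        have hsb := stepB g hgm hlux_g
        have hge : μ B ^ (η - 1) * lam * N ≤ C :=
          le_trans (mul_le_mul_left (mul_le_mul_right hIlow _) N) hsb
        have hfin : lam * a ≤ C := by
          rw [hadef]
          calc lam * (μ B ^ (η - 1) * N) = μ B ^ (η - 1) * lam * N := by ring
            _ ≤ C := hge
        exact absurd ((ENNReal.le_div_iff_mul_le (Or.inl ha0) (Or.inl hat)).mpr hfin)
          (not_le.mpr hlam)
      -- monotone convergence
      have hmct : ∫⁻ x in G, (⨆ n, Fn n x) ∂μ = ⨆ n, ∫⁻ x in G, Fn n x ∂μ :=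
        lintegral_iSup hFnm hFnmono
      have hsup : (∫⁻ x in G,
          ((B.indicator (fun y => (ω y)⁻¹) x) / lam) ^ (conjExp p x).toReal ∂μ)
          = ⨆ n, ∫⁻ x in G, Fn n x ∂μ := by
        rw [← hmct]
        refine lintegral_congr_ae (ae_restrict_of_ae (hωae.mono fun x hx => ?_))
        by_cases hxB : x ∈ B
        · have hne : (ω x)⁻¹ ≠ ∞ := ENNReal.inv_ne_top.mpr hx.1.ne'
          obtain ⟨k, hk⟩ := ENNReal.exists_nat_gt hne
          apply le_antisymm
          · refine le_iSup_of_le k (le_of_eq ?_)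
            simp only [hFndef, hhhdef, Set.indicator_of_mem hxB]
            rw [min_eq_left hk.le]
          · refine iSup_le fun m => ?_
            refine ENNReal.rpow_le_rpow (ENNReal.div_le_div_right ?_ lam)
              ENNReal.toReal_nonneg
            simp only [hFndef, hhhdef, Set.indicator_of_mem hxB]
            exact min_le_left _ _
        · simp [hFndef, hhhdef, Set.indicator_of_notMem hxB]
      rw [hsup]
      exact iSup_le key_n
    -- conclusion for the fixed ball
    calc μ B ^ (η - 1) * N * P ≤ a * (C / a) := mul_le_mul_right hPle a
      _ = C := ENNReal.mul_div_cancel' (fun h => absurd h ha0) (fun h => absurd h hat)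


  exact ne_top_of_le_ne_top hC main


end
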